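/- Let β > 1 and f ∈ L¹(ℝ). If sup_{t > 0} ω₁(f)(t)/t^β < ∞, then 𝔉f ∈ L¹(ℝ). -/

import Mathlib

open MeasureTheory Filter
open scoped ENNReal

noncomputable section

/-- The Fourier transform on the real line with kernel `e^{-iξx}`:
`𝔉f(ξ) = ∫ f(x) e^{-iξx} dx`. -/
def FT (f : ℝ → ℂ) (ξ : ℝ) : ℂ :=
  ∫ x : ℝ, f x * Complex.exp (-Complex.I * ξ * x)

/-- The second-order modulus of continuity of `f` in `L^p(ℝ)`:
`ω_p(f)(t) = ‖f(·+t) + f(·−t) − 2f‖_{L^p}`. -/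
def modCont (p : ℝ≥0∞) (f : ℝ → ℂ) (t : ℝ) : ℝ :=
  (eLpNorm (fun x => f (x + t) + f (x - t) - 2 * f x) p volume).toReal

lemma norm_exp_kernel (ξ x : ℝ) : ‖Complex.exp (-Complex.I * ξ * x)‖ = 1 := by
  rw [show -Complex.I * (ξ:ℂ) * (x:ℂ) = (↑(-(ξ * x)) : ℂ) * Complex.I by push_cast; ring,
    Complex.norm_exp_ofReal_mul_I]

lemma integrable_mul_exp {f : ℝ → ℂ} (hf : Integrable f volume) (ξ : ℝ) :
    Integrable (fun x : ℝ => f x * Complex.exp (-Complex.I * ξ * x)) volume := by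
  have : Integrable (fun x : ℝ => Complex.exp (-Complex.I * ξ * x) * f x) volume := by
    refine hf.bdd_mul (c := 1) ?_ (ae_of_all _ fun x => le_of_eq (norm_exp_kernel ξ x))
    exact (Complex.continuous_exp.comp (by fun_prop)).aestronglyMeasurable
  simpa [mul_comm] using this

lemma FT_norm_le {f : ℝ → ℂ} (ξ : ℝ) : ‖FT f ξ‖ ≤ ∫ x : ℝ, ‖f x‖ := by
  refine (norm_integral_le_integral_norm _).trans_eq ?_
  congr 1; ext x; rw [norm_mul, norm_exp_kernel, mul_one]

lemma FT_translate_add {f : ℝ → ℂ} (ξ t : ℝ) :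
    ∫ x : ℝ, f (x + t) * Complex.exp (-Complex.I * ξ * x)
      = Complex.exp (Complex.I * ξ * t) * FT f ξ := by
  have hexp : ∀ y : ℝ, Complex.exp (-Complex.I * ξ * (↑y - ↑t))
      = Complex.exp (-Complex.I * ξ * y) * Complex.exp (Complex.I * ξ * t) := by
    intro y; rw [← Complex.exp_add]; congr 1; push_cast; ring
  calc ∫ x : ℝ, f (x + t) * Complex.exp (-Complex.I * ξ * x)
      = ∫ x : ℝ, (fun y : ℝ => f y * Complex.exp (-Complex.I * ξ * (↑y - ↑t))) (x + t) := by
        congr 1; ext x; simp only []; congr 2; push_cast; ring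
    _ = ∫ y : ℝ, f y * Complex.exp (-Complex.I * ξ * (↑y - ↑t)) :=
        integral_add_right_eq_self (fun y : ℝ => f y * Complex.exp (-Complex.I * ξ * (↑y - ↑t))) t
    _ = Complex.exp (Complex.I * ξ * t) * FT f ξ := by
        rw [FT, ← integral_const_mul]
        congr 1; ext y; rw [hexp]; ring

lemma FT_translate_sub {f : ℝ → ℂ} (ξ t : ℝ) :
    ∫ x : ℝ, f (x - t) * Complex.exp (-Complex.I * ξ * x)
      = Complex.exp (-(Complex.I * ξ * t)) * FT f ξ := by
  have hexp : ∀ y : ℝ, Complex.exp (-Complex.I * ξ * (↑y + ↑t))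
      = Complex.exp (-Complex.I * ξ * y) * Complex.exp (-(Complex.I * ξ * t)) := by
    intro y; rw [← Complex.exp_add]; congr 1; push_cast; ring
  calc ∫ x : ℝ, f (x - t) * Complex.exp (-Complex.I * ξ * x)
      = ∫ x : ℝ, (fun y : ℝ => f y * Complex.exp (-Complex.I * ξ * (↑y + ↑t))) (x - t) := by
        congr 1; ext x; simp only []; congr 2; push_cast; ring
    _ = ∫ y : ℝ, f y * Complex.exp (-Complex.I * ξ * (↑y + ↑t)) :=
        integral_sub_right_eq_self (fun y : ℝ => f y * Complex.exp (-Complex.I * ξ * (↑y + ↑t))) t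
    _ = Complex.exp (-(Complex.I * ξ * t)) * FT f ξ := by
        rw [FT, ← integral_const_mul]
        congr 1; ext y; rw [hexp]; ring

lemma FT_diff {f : ℝ → ℂ} (hf : Integrable f volume) (ξ t : ℝ) :
    ∫ x : ℝ, (f (x + t) + f (x - t) - 2 * f x) * Complex.exp (-Complex.I * ξ * x)
      = (Complex.exp (Complex.I * ξ * t) + Complex.exp (-(Complex.I * ξ * t)) - 2) * FT f ξ := by
  have h1 := integrable_mul_exp (hf.comp_add_right t) ξ
  have h2 := integrable_mul_exp (hf.comp_sub_right t) ξ
  have h3 : Integrable (fun x : ℝ => (2 : ℂ) * f x * Complex.exp (-Complex.I * ξ * x)) volume := by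
    simpa [mul_assoc] using (integrable_mul_exp hf ξ).const_mul (2 : ℂ)
  have hs : Integrable (fun x : ℝ => f (x + t) * Complex.exp (-Complex.I * ξ * x)
      + f (x - t) * Complex.exp (-Complex.I * ξ * x)) volume := h1.add h2
  have h2FT : ∫ x : ℝ, (2:ℂ) * f x * Complex.exp (-Complex.I * ξ * x) = 2 * FT f ξ := by
    rw [FT, ← integral_const_mul]
    congr 1; ext x; ring
  calc ∫ x : ℝ, (f (x + t) + f (x - t) - 2 * f x) * Complex.exp (-Complex.I * ξ * x)
      = ∫ x : ℝ, (f (x + t) * Complex.exp (-Complex.I * ξ * x)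
          + f (x - t) * Complex.exp (-Complex.I * ξ * x)
          - 2 * f x * Complex.exp (-Complex.I * ξ * x)) := by
        congr 1; ext x; ring
    _ = (∫ x : ℝ, f (x + t) * Complex.exp (-Complex.I * ξ * x)
          + f (x - t) * Complex.exp (-Complex.I * ξ * x))
          - ∫ x : ℝ, (2:ℂ) * f x * Complex.exp (-Complex.I * ξ * x) := integral_sub hs h3
    _ = (∫ x : ℝ, f (x + t) * Complex.exp (-Complex.I * ξ * x))
          + (∫ x : ℝ, f (x - t) * Complex.exp (-Complex.I * ξ * x))
          - ∫ x : ℝ, (2:ℂ) * f x * Complex.exp (-Complex.I * ξ * x) := by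
        rw [integral_add h1 h2]
    _ = (Complex.exp (Complex.I * ξ * t) + Complex.exp (-(Complex.I * ξ * t)) - 2) * FT f ξ := by
        rw [FT_translate_add, FT_translate_sub, h2FT]; ring

lemma key_bound {f : ℝ → ℂ} (hf : Integrable f volume) {β A : ℝ}
    (hA : ∀ t > (0 : ℝ), modCont 1 f t / t ^ β ≤ A) {ξ : ℝ} (hξ : ξ ≠ 0) :
    ‖FT f ξ‖ ≤ A / 4 * (Real.pi / |ξ|) ^ β := by
  have habs : (0:ℝ) < |ξ| := abs_pos.mpr hξ
  set t : ℝ := Real.pi / |ξ| with ht_def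
  have ht : 0 < t := div_pos Real.pi_pos habs
  set g : ℝ → ℂ := fun x => f (x + t) + f (x - t) - 2 * f x with hg_def
  have hg : Integrable g volume :=
    ((hf.comp_add_right t).add (hf.comp_sub_right t)).sub (hf.const_mul 2)
  have hξt : ξ * t = Real.pi ∨ ξ * t = -Real.pi := by
    rcases lt_or_gt_of_ne hξ with h | h
    · right; rw [ht_def, abs_of_neg h, div_neg, mul_neg, mul_comm, div_mul_cancel₀ _ hξ]
    · left; rw [ht_def, abs_of_pos h]
      field_simp
  have keyexp : ∀ θ : ℝ, (θ = Real.pi ∨ θ = -Real.pi) →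
      Complex.exp ((θ:ℂ) * Complex.I) = -1 := by
    rintro θ (rfl | rfl)
    · exact Complex.exp_pi_mul_I
    · rw [show ((-Real.pi : ℝ):ℂ) * Complex.I = -(↑Real.pi * Complex.I) by push_cast; ring,
        Complex.exp_neg, Complex.exp_pi_mul_I]
      norm_num
  have hc : Complex.exp (Complex.I * ξ * t) + Complex.exp (-(Complex.I * ξ * t)) - 2 = -4 := by
    have e1 : Complex.I * ξ * t = ((ξ * t : ℝ):ℂ) * Complex.I := by push_cast; ring
    have e2 : -(((ξ * t : ℝ):ℂ) * Complex.I) = ((-(ξ * t) : ℝ):ℂ) * Complex.I := by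
      push_cast; ring
    rw [e1, e2, keyexp _ hξt, keyexp _ (by rcases hξt with h | h <;> simp [h])]
    norm_num
  have hmod : modCont 1 f t = ∫ x : ℝ, ‖g x‖ := by
    rw [modCont, eLpNorm_one_eq_lintegral_enorm,
      ← integral_norm_eq_lintegral_enorm hg.aestronglyMeasurable]
  have hFTg : ‖(∫ x : ℝ, g x * Complex.exp (-Complex.I * ξ * x))‖ ≤ modCont 1 f t := by
    rw [hmod]
    refine (norm_integral_le_integral_norm _).trans_eq ?_
    congr 1; ext x; rw [norm_mul, norm_exp_kernel, mul_one]
  have heq : (∫ x : ℝ, g x * Complex.exp (-Complex.I * ξ * x)) = (-4 : ℂ) * FT f ξ := by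
    rw [hg_def]
    simp only []
    rw [FT_diff hf ξ t, hc]
  rw [heq] at hFTg
  have h4 : (4:ℝ) * ‖FT f ξ‖ ≤ modCont 1 f t := by
    calc (4:ℝ) * ‖FT f ξ‖ = ‖(-4 : ℂ) * FT f ξ‖ := by
          rw [norm_mul]; norm_num
      _ ≤ modCont 1 f t := hFTg
  have htpow : (0:ℝ) < t ^ β := Real.rpow_pos_of_pos ht β
  have hAt : modCont 1 f t ≤ A * t ^ β := by
    have := hA t ht
    rwa [div_le_iff₀ htpow] at this
  nlinarith [h4, hAt]

/-- If `β > 1`, `f ∈ L¹(ℝ)` and `sup_{t>0} ω₁(f)(t)/t^β < ∞`, then `𝔉f ∈ L¹(ℝ)`. -/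
theorem fourier_integrable_of_modCont (β : ℝ) (hβ : 1 < β) (f : ℝ → ℂ)
    (hf : Integrable f volume)
    (h : ∃ A : ℝ, ∀ t > (0 : ℝ), modCont 1 f t / t ^ β ≤ A) :
    Integrable (FT f) volume := by
  obtain ⟨A, hA⟩ := h
  set M : ℝ := ∫ x : ℝ, ‖f x‖ with hM_def
  have hM : 0 ≤ M := integral_nonneg fun x => norm_nonneg _
  set C : ℝ := max M (A / 4 * Real.pi ^ β) with hC_def
  have hC0 : 0 ≤ C := le_trans hM (le_max_left _ _)
  have hcont : Continuous (FT f) := by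
    apply continuous_of_dominated (bound := fun x => ‖f x‖)
    · intro ξ; exact (integrable_mul_exp hf ξ).1
    · intro ξ; filter_upwards with x
      rw [norm_mul, norm_exp_kernel, mul_one]
    · exact hf.norm
    · filter_upwards with x
      exact continuous_const.mul (Complex.continuous_exp.comp (by fun_prop))
  have hbound : ∀ ξ : ℝ, ‖FT f ξ‖ ≤ C * 2 ^ β * (1 + |ξ|) ^ (-β) := by
    intro ξ
    have h1ξ : (0:ℝ) < 1 + |ξ| := by positivity
    rcases le_or_gt |ξ| 1 with hle | hlt
    · have h2 : (2:ℝ) ^ (-β) ≤ (1 + |ξ|) ^ (-β) :=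
        Real.rpow_le_rpow_of_nonpos h1ξ (by linarith) (by linarith)
      have hstep : C * 2 ^ β * 2 ^ (-β) ≤ C * 2 ^ β * (1 + |ξ|) ^ (-β) := by
        apply mul_le_mul_of_nonneg_left h2; positivity
      have h22 : C * (2:ℝ) ^ β * 2 ^ (-β) = C := by
        rw [mul_assoc, ← Real.rpow_add two_pos]; simp
      calc ‖FT f ξ‖ ≤ M := FT_norm_le ξ
        _ ≤ C := le_max_left _ _
        _ = C * 2 ^ β * 2 ^ (-β) := h22.symm
        _ ≤ C * 2 ^ β * (1 + |ξ|) ^ (-β) := hstep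
    · have hξ : ξ ≠ 0 := by
        intro h0; rw [h0, abs_zero] at hlt; linarith
      have habs : (0:ℝ) < |ξ| := abs_pos.mpr hξ
      have hkey := key_bound hf hA hξ
      have hdiv : A / 4 * (Real.pi / |ξ|) ^ β = (A / 4 * Real.pi ^ β) * |ξ| ^ (-β) := by
        rw [Real.div_rpow Real.pi_pos.le habs.le, Real.rpow_neg habs.le]
        ring
      have step1 : ‖FT f ξ‖ ≤ (A / 4 * Real.pi ^ β) * |ξ| ^ (-β) := by
        rw [← hdiv]; exact hkey
      have step2 : (A / 4 * Real.pi ^ β) * |ξ| ^ (-β) ≤ C * |ξ| ^ (-β) := by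
        apply mul_le_mul_of_nonneg_right (le_max_right _ _)
        positivity
      have h1le2 : 1 + |ξ| ≤ 2 * |ξ| := by linarith
      have h3 : (2 * |ξ|) ^ (-β) ≤ (1 + |ξ|) ^ (-β) :=
        Real.rpow_le_rpow_of_nonpos h1ξ h1le2 (by linarith)
      have h4 : (2 * |ξ|) ^ (-β) = 2 ^ (-β) * |ξ| ^ (-β) :=
        Real.mul_rpow (by norm_num) habs.le
      have step3 : C * |ξ| ^ (-β) ≤ C * 2 ^ β * (1 + |ξ|) ^ (-β) := by
        have hmm : C * 2 ^ β * (2 * |ξ|) ^ (-β) ≤ C * 2 ^ β * (1 + |ξ|) ^ (-β) := by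
          apply mul_le_mul_of_nonneg_left h3; positivity
        refine le_trans (le_of_eq ?_) hmm
        rw [h4, ← mul_assoc, mul_assoc C, ← Real.rpow_add two_pos]
        simp
      exact step1.trans (step2.trans step3)
  have hint : Integrable (fun ξ : ℝ => C * 2 ^ β * (1 + ‖ξ‖) ^ (-β)) volume :=
    (integrable_one_add_norm (E := ℝ) (by simpa using hβ)).const_mul _
  refine hint.mono' hcont.aestronglyMeasurable ?_
  filter_upwards with ξ
  simpa [Real.norm_eq_abs] using hbound ξ

end
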